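/- (Farkas' Lemma, affine form) Let A be an m×n real matrix, b ∈ ℝ^m, c ∈ ℝ^n and d ∈ ℝ. Assume the polyhedron {x : A x ≤ b} is nonempty. Then {x : A x ≤ b} ⊆ {x : cᵀ x ≤ d} if and only if there exists y ∈ ℝ^m with y ≥ 0, Aᵀ y = c, and bᵀ y ≤ d. -/

import Mathlib

open Finset

section Cone

variable {E : Type*} [NormedAddCommGroup E] [InnerProductSpace ℝ E] [FiniteDimensional ℝ E]

/-- The cone generated by finitely many vectors. -/
def coneSet {m : ℕ} (v : Fin m → E) : Set E :=
  {x | ∃ y : Fin m → ℝ, (∀ i, 0 ≤ y i) ∧ ∑ i, y i • v i = x}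

noncomputable def combMap {m : ℕ} (v : Fin m → E) : (Fin m → ℝ) →ₗ[ℝ] E where
  toFun y := ∑ i, y i • v i
  map_add' a b := by simp [add_smul, Finset.sum_add_distrib]
  map_smul' r a := by simp [smul_smul, Finset.smul_sum]

lemma isClosed_coneSet : ∀ (m : ℕ) (v : Fin m → E), IsClosed (coneSet v) := by
  intro m
  induction m with
  | zero =>
    intro v
    have : coneSet v = {0} := by
      ext x
      simp only [coneSet, Set.mem_setOf_eq, Set.mem_singleton_iff, Finset.univ_eq_empty,
        Finset.sum_empty]
      constructor
      · rintro ⟨y, _, h⟩; exact h.symm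
      · rintro rfl; exact ⟨fun _ => 0, fun i => le_rfl, rfl⟩
    rw [this]; exact isClosed_singleton
  | succ m ih =>
    intro v
    by_cases hli : LinearIndependent ℝ v
    · -- closed embedding case
      have hinj : Function.Injective (combMap v) := by
        rw [← LinearMap.ker_eq_bot]
        rw [LinearMap.ker_eq_bot']
        intro g hg
        have := Fintype.linearIndependent_iff.1 hli g hg
        funext i; exact this i
      have hce := LinearMap.isClosedEmbedding_of_injective
        (LinearMap.ker_eq_bot.2 hinj)
      have hset : coneSet v = (combMap v) '' {y | ∀ i, 0 ≤ y i} := rfl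
      rw [hset]
      apply hce.isClosedMap
      have : {y : Fin (m+1) → ℝ | ∀ i, 0 ≤ y i} = ⋂ i, {y | 0 ≤ y i} := by
        ext y; simp
      rw [this]
      exact isClosed_iInter fun i => isClosed_le continuous_const (continuous_apply i)
    · -- dependent case: reduce to subfamilies
      obtain ⟨g, hg0, j0, hj0⟩ := Fintype.not_linearIndependent_iff.1 hli
      -- get μ with ∑ μ i • v i = 0 and some positive coordinate
      obtain ⟨μ, hμ0, jp, hjp⟩ :
          ∃ μ : Fin (m+1) → ℝ, ∑ i, μ i • v i = 0 ∧ ∃ j, 0 < μ j := by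
        rcases lt_trichotomy (g j0) 0 with h | h | h
        · refine ⟨-g, ?_, j0, by simpa using h⟩
          have : ∑ i, (-g) i • v i = -∑ i, g i • v i := by
            rw [← Finset.sum_neg_distrib]
            congr 1; funext i; simp [neg_smul]
          rw [this, hg0, neg_zero]
        · exact absurd h hj0
        · exact ⟨g, hg0, j0, h⟩
      have hsub : coneSet v = ⋃ i0 : Fin (m+1), coneSet (v ∘ i0.succAbove) := by
        ext x
        constructor
        · rintro ⟨y, hy, hyx⟩
          set S : Finset (Fin (m+1)) := univ.filter (fun i => 0 < μ i) with hS
          have hSne : S.Nonempty := ⟨jp, by simp [hS, hjp]⟩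
          obtain ⟨i0, hi0S, hi0min⟩ := S.exists_min_image (fun i => y i / μ i) hSne
          have hμi0 : 0 < μ i0 := by simpa [hS] using hi0S
          set t := y i0 / μ i0 with ht
          have ht0 : 0 ≤ t := div_nonneg (hy i0) hμi0.le
          set y' : Fin (m+1) → ℝ := fun i => y i - t * μ i with hy'
          have hy'0 : ∀ i, 0 ≤ y' i := by
            intro i
            by_cases hμi : 0 < μ i
            · have := hi0min i (by simp [hS, hμi])
              have : t * μ i ≤ y i := by
                rw [← le_div_iff₀ hμi]; exact this
              simpa [hy'] using this
            · push_neg at hμi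
              have : t * μ i ≤ 0 := mul_nonpos_of_nonneg_of_nonpos ht0 hμi
              have := le_trans this (hy i)
              simpa [hy'] using sub_nonneg.2 (le_trans (mul_nonpos_of_nonneg_of_nonpos ht0 hμi) (hy i))
          have hy'i0 : y' i0 = 0 := by
            simp [hy', ht, div_mul_cancel₀ _ (ne_of_gt hμi0)]
          have hy'sum : ∑ i, y' i • v i = x := by
            have : ∑ i, y' i • v i = (∑ i, y i • v i) - t • (∑ i, μ i • v i) := by
              rw [Finset.smul_sum, ← Finset.sum_sub_distrib]
              congr 1; funext i
              simp [hy', sub_smul, smul_smul]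
            rw [this, hμ0, smul_zero, sub_zero, hyx]
          refine Set.mem_iUnion.2 ⟨i0, ⟨fun j => y' (i0.succAbove j), fun j => hy'0 _, ?_⟩⟩
          have := Fin.sum_univ_succAbove (fun i => y' i • v i) i0
          rw [hy'i0] at this
          simp only [zero_smul, zero_add] at this
          rw [← hy'sum, this]
          rfl
        · intro hx
          obtain ⟨i0, y, hy, hyx⟩ := Set.mem_iUnion.1 hx
          refine ⟨(i0.insertNth (0:ℝ) y : Fin (m+1) → ℝ), ?_, ?_⟩
          · intro i
            rcases eq_or_ne i0 i with rfl | hne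
            · simp [Fin.insertNth_apply_same]
            · obtain ⟨j, rfl⟩ := Fin.exists_succAbove_eq (Ne.symm hne)
              rw [Fin.insertNth_apply_succAbove]
              exact hy j
          · rw [Fin.sum_univ_succAbove (fun i => (i0.insertNth (0:ℝ) y : Fin (m+1) → ℝ) i • v i) i0]
            simp only [Fin.insertNth_apply_same, Fin.insertNth_apply_succAbove, zero_smul,
              zero_add]
            exact hyx
      rw [hsub]
      exact isClosed_iUnion_of_finite fun i0 => ih (v ∘ i0.succAbove)

open scoped InnerProductSpace in
lemma farkas_cone {m : ℕ} (v : Fin m → E) (c : E)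
    (h : ∀ x : E, (∀ i, ⟪v i, x⟫_ℝ ≤ 0) → ⟪c, x⟫_ℝ ≤ 0) :
    ∃ y : Fin m → ℝ, (∀ i, 0 ≤ y i) ∧ ∑ i, y i • v i = c := by
  by_contra hc
  have hcK : c ∉ coneSet v := fun ⟨y, hy, hs⟩ => hc ⟨y, hy, hs⟩
  set K : ConvexCone ℝ E :=
    { carrier := coneSet v
      smul_mem' := by
        rintro r hr x ⟨y, hy, hs⟩
        exact ⟨fun i => r * y i, fun i => mul_nonneg hr.le (hy i), by
          simp only [mul_smul, ← Finset.smul_sum, hs]⟩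
      add_mem' := by
        rintro x ⟨y, hy, hs⟩ x' ⟨y', hy', hs'⟩
        exact ⟨fun i => y i + y' i, fun i => add_nonneg (hy i) (hy' i), by
          simp only [add_smul, Finset.sum_add_distrib, hs, hs']⟩ } with hK
  have hKne : (K : Set E).Nonempty := ⟨0, ⟨fun _ => 0, fun i => le_refl _, by simp⟩⟩
  have hKcl : IsClosed (K : Set E) := isClosed_coneSet m v
  obtain ⟨z, hz, hzc⟩ :=
    ProperCone.hyperplane_separation' (x₀ := c)
      ({ carrier := coneSet v
         add_mem' := fun hx hx' => K.add_mem hx hx'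
         zero_mem' := ⟨fun _ => 0, fun i => le_refl _, by simp⟩
         smul_mem' := by
           rintro r x ⟨y, hy, hs⟩
           exact ⟨fun i => r * y i, fun i => mul_nonneg r.2 (hy i), by
             rw [← hs, Finset.smul_sum]; exact Finset.sum_congr rfl fun i _ => mul_smul (r:ℝ) (y i) (v i)⟩
         isClosed' := hKcl } : ProperCone ℝ E) hcK
  rw [real_inner_comm] at hzc
  have hvz : ∀ i, ⟪v i, -z⟫_ℝ ≤ 0 := by
    intro i
    have hvi : v i ∈ K := ⟨fun i' => if i' = i then 1 else 0, by
      intro i'; by_cases h : i' = i <;> simp [h], by simp [ite_smul]⟩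
    have := hz (v i) hvi
    rw [inner_neg_right]
    linarith
  have := h (-z) hvz
  rw [inner_neg_right] at this
  rw [real_inner_comm] at hzc
  linarith

end Cone

section Euclid

lemma euc_sum_apply {k : ℕ} {ι : Type*} (s : Finset ι) (f : ι → EuclideanSpace ℝ (Fin k))
    (j : Fin k) : (∑ i ∈ s, f i) j = ∑ i ∈ s, f i j :=
  map_sum (EuclideanSpace.proj (𝕜 := ℝ) j) f s

lemma euc_smul_apply {k : ℕ} (r : ℝ) (x : EuclideanSpace ℝ (Fin k)) (j : Fin k) :
    (r • x) j = r * x j := rfl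

end Euclid

theorem farkas_lemma_affine (m n : ℕ) (A : Matrix (Fin m) (Fin n) ℝ)
    (b : Fin m → ℝ) (c : Fin n → ℝ) (d : ℝ)
    (hne : ∃ x : Fin n → ℝ, ∀ i, A.mulVec x i ≤ b i) :
    ({x : Fin n → ℝ | ∀ i, A.mulVec x i ≤ b i} ⊆
      {x : Fin n → ℝ | ∑ j, c j * x j ≤ d}) ↔
    ∃ y : Fin m → ℝ, (∀ i, 0 ≤ y i) ∧ A.transpose.mulVec y = c ∧ ∑ i, b i * y i ≤ d := by
  constructor
  · intro hsub
    -- homogenize in ℝ^(n+1)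
    set E := EuclideanSpace ℝ (Fin (n+1)) with hE
    set w : Fin m → E := fun i => WithLp.toLp 2 (Fin.snoc (fun j => A i j) (-(b i)) : Fin (n+1) → ℝ) with hw
    set e : E := WithLp.toLp 2 (Fin.snoc (0 : Fin n → ℝ) (-1) : Fin (n+1) → ℝ) with he
    set u : Fin (m+1) → E := Fin.snoc w e with hu
    set c' : E := WithLp.toLp 2 (Fin.snoc c (-d) : Fin (n+1) → ℝ) with hc'
    have key : ∀ z : E, (∀ i, inner ℝ (u i) z ≤ (0:ℝ)) → inner ℝ c' z ≤ (0:ℝ) := by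
      intro z hz
      set x : Fin n → ℝ := fun j => z (Fin.castSucc j) with hx
      set t : ℝ := z (Fin.last n) with htdef
      have hinner : ∀ p : E, (inner ℝ p z : ℝ) = ∑ j : Fin n, p (Fin.castSucc j) * x j + p (Fin.last n) * t := by
        intro p
        rw [PiLp.inner_apply]
        simp only [RCLike.inner_apply, conj_trivial]
        rw [Fin.sum_univ_castSucc]
        exact congrArg₂ (· + ·) (Finset.sum_congr rfl fun j _ => mul_comm _ _) (mul_comm _ _)
      have ht : 0 ≤ t := by
        have := hz (Fin.last m)
        rw [hu, Fin.snoc_last, hinner] at this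
        simp [he, Fin.snoc_castSucc, Fin.snoc_last] at this
        linarith
      have hAxt : ∀ i, A.mulVec x i ≤ b i * t := by
        intro i
        have := hz (Fin.castSucc i)
        rw [hu, Fin.snoc_castSucc, hinner] at this
        simp only [hw, Fin.snoc_castSucc, Fin.snoc_last] at this
        have hmv : A.mulVec x i = ∑ j, A i j * x j := rfl
        rw [hmv]; linarith
      rw [hinner]
      simp only [hc', Fin.snoc_castSucc, Fin.snoc_last]
      rcases eq_or_lt_of_le ht with ht0 | htpos
      · -- t = 0
        have hAx : ∀ i, A.mulVec x i ≤ 0 := by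
          intro i; have := hAxt i; rw [← ht0] at this; simpa using this
        obtain ⟨x₀, hx₀⟩ := hne
        have hD : ∑ j, c j * x₀ j ≤ d := hsub hx₀
        have hS : ∑ j, c j * x j ≤ 0 := by
          by_contra hS
          push_neg at hS
          set S := ∑ j, c j * x j with hSdef
          set s := (d - ∑ j, c j * x₀ j + 1) / S with hs
          have hs0 : 0 ≤ s := by
            apply div_nonneg _ hS.le
            linarith
          have hfeas : ∀ i, A.mulVec (x₀ + s • x) i ≤ b i := by
            intro i
            rw [Matrix.mulVec_add, Matrix.mulVec_smul]
            have := hAx i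
            have h2 := hx₀ i
            simp only [Pi.add_apply, Pi.smul_apply, smul_eq_mul]
            nlinarith [mul_nonpos_of_nonneg_of_nonpos hs0 (hAx i)]
          have := hsub hfeas
          simp only [Set.mem_setOf_eq, Pi.add_apply, Pi.smul_apply, smul_eq_mul] at this
          have hexp : ∑ j, c j * (x₀ j + s * x j)
              = (∑ j, c j * x₀ j) + s * S := by
            rw [hSdef, Finset.mul_sum, ← Finset.sum_add_distrib]
            congr 1; funext j; ring
          rw [hexp] at this
          rw [hs, div_mul_cancel₀ _ (ne_of_gt hS)] at this
          linarith
        rw [← ht0]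
        simpa using hS
      · -- t > 0
        set x' := t⁻¹ • x with hx'
        have hfeas : ∀ i, A.mulVec x' i ≤ b i := by
          intro i
          rw [hx', Matrix.mulVec_smul]
          simp only [Pi.smul_apply, smul_eq_mul]
          rw [inv_mul_le_iff₀ htpos]
          calc A.mulVec x i ≤ b i * t := hAxt i
            _ = t * b i := by ring
        have := hsub hfeas
        simp only [Set.mem_setOf_eq, hx', Pi.smul_apply, smul_eq_mul] at this
        have hexp : ∑ j, c j * (t⁻¹ * x j) = t⁻¹ * ∑ j, c j * x j := by
          rw [Finset.mul_sum]; congr 1; funext j; ring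
        rw [hexp, inv_mul_le_iff₀ htpos] at this
        nlinarith
    obtain ⟨Y, hY, hYsum⟩ := farkas_cone u c' key
    have coord : ∀ (p : E) (j : Fin (n+1)),
        (inner ℝ p (EuclideanSpace.single j (1:ℝ)) : ℝ) = p j := by
      intro p j
      rw [EuclideanSpace.inner_single_right]
      simp
    have hcoord : ∀ j : Fin (n+1), ∑ i, Y i * u i j = c' j := by
      intro j
      have h := congrArg (fun p : E => (inner ℝ p (EuclideanSpace.single j (1:ℝ)) : ℝ)) hYsum
      rw [sum_inner] at h
      simp only [real_inner_smul_left] at h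
      simp only [coord] at h
      exact h
    refine ⟨fun i => Y (Fin.castSucc i), fun i => hY _, ?_, ?_⟩
    · funext j
      have h := hcoord (Fin.castSucc j)
      rw [Fin.sum_univ_castSucc] at h
      simp only [hu, hw, he, hc', Fin.snoc_castSucc, Fin.snoc_last, Pi.zero_apply,
        mul_zero, add_zero] at h
      rw [Matrix.mulVec]
      simp only [dotProduct, Matrix.transpose_apply]
      rw [← h]
      congr 1; funext i; ring
    · have h := hcoord (Fin.last n)
      rw [Fin.sum_univ_castSucc] at h
      simp only [hu, hw, he, hc', Fin.snoc_castSucc, Fin.snoc_last] at h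
      have hμ : 0 ≤ Y (Fin.last m) := hY _
      have hsum : ∑ i, b i * Y (Fin.castSucc i) = d - Y (Fin.last m) := by
        have h2 : ∑ i : Fin m, Y (Fin.castSucc i) * (-(b i)) = -(∑ i, b i * Y (Fin.castSucc i)) := by
          rw [← Finset.sum_neg_distrib]; congr 1; funext i; ring
        rw [h2] at h
        linarith
      rw [hsum]; linarith
  · rintro ⟨y, hy, hAy, hby⟩ x hx
    simp only [Set.mem_setOf_eq] at hx ⊢
    have hc : ∀ j, c j = ∑ i, A i j * y i := by
      intro j
      rw [← hAy]
      simp [Matrix.mulVec, dotProduct, Matrix.transpose_apply]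
    calc ∑ j, c j * x j = ∑ j, ∑ i, A i j * y i * x j := by
          congr 1; funext j; rw [hc j, Finset.sum_mul]
      _ = ∑ i, ∑ j, A i j * y i * x j := Finset.sum_comm
      _ = ∑ i, y i * A.mulVec x i := by
          congr 1; funext i
          rw [Matrix.mulVec]
          simp only [dotProduct, Finset.mul_sum]
          congr 1; funext j; ring
      _ ≤ ∑ i, y i * b i := Finset.sum_le_sum fun i _ => mul_le_mul_of_nonneg_left (hx i) (hy i)
      _ ≤ d := by
          rw [show ∑ i, y i * b i = ∑ i, b i * y i by congr 1; funext i; ring]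
          exact hby
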